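/- Let F, Q be n_x×n_x real matrices, B an n_x×n_u real matrix, u ∈ ℝ^{n_u}, f ∈ ℝ^{n_x}, and z ∈ ℝ^{n_z} fixed. Define the one-step Kalman map T(x, P) := (x⁺, P⁺), where μ := F ·ᵥ x + B ·ᵥ u + f, P⁻ := F·P·Fᵀ + Q, S := H·P⁻·Hᵀ + R, K := P⁻·Hᵀ·S⁻¹, x⁺ := μ + K ·ᵥ (z − H ·ᵥ μ), and P⁺ := (I − K·H)·P⁻. Let (x₀, P₀) be such that S₀ := H·(F·P₀·Fᵀ + Q)·Hᵀ + R is invertible, and set P₀⁻ := F·P₀·Fᵀ + Q, K₀ := P₀⁻·Hᵀ·S₀⁻¹, μ₀ := F ·ᵥ x₀ + B ·ᵥ u + f. Then T is Fréchet differentiable at (x₀, P₀) with derivative the linear map (Δx, ΔP) ↦ ( (I − K₀·H)·F ·ᵥ Δx + ((I − K₀·H)·F·ΔP·Fᵀ·Hᵀ·S₀⁻¹) ·ᵥ (z − H ·ᵥ μ₀), (I − K₀·H)·F·ΔP·Fᵀ·(I − Hᵀ·S₀⁻¹·H·P₀⁻) ). -/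

import Mathlib

open Matrix

attribute [local instance] Matrix.normedAddCommGroup Matrix.normedSpace

namespace KalmanAux

variable {E : Type*} [NormedAddCommGroup E] [NormedSpace ℝ E]

lemma isBBM_mul {a b c : ℕ} :
    IsBoundedBilinearMap ℝ
      (fun p : Matrix (Fin a) (Fin b) ℝ × Matrix (Fin b) (Fin c) ℝ => p.1 * p.2) where
  add_left A A' B := Matrix.add_mul A A' B
  smul_left r A B := Matrix.smul_mul r A B
  add_right A B B' := Matrix.mul_add A B B'
  smul_right r A B := Matrix.mul_smul A r B
  bound := by
    refine ⟨b + 1, by positivity, fun A B => ?_⟩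
    rw [Matrix.norm_le_iff (by positivity)]
    intro i j
    rw [Matrix.mul_apply]
    calc ‖∑ k, A i k * B k j‖ ≤ ∑ k, ‖A i k * B k j‖ := norm_sum_le _ _
      _ ≤ ∑ _k : Fin b, ‖A‖ * ‖B‖ := by
          refine Finset.sum_le_sum fun k _ => ?_
          rw [norm_mul]
          exact mul_le_mul (A.norm_entry_le_entrywise_sup_norm)
            (B.norm_entry_le_entrywise_sup_norm) (norm_nonneg _) (norm_nonneg _)
      _ = (b : ℝ) * ‖A‖ * ‖B‖ := by simp [mul_assoc]
      _ ≤ ((b : ℝ) + 1) * ‖A‖ * ‖B‖ := by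
          have := norm_nonneg A; have := norm_nonneg B; nlinarith

lemma isBBM_mulVec {a b : ℕ} :
    IsBoundedBilinearMap ℝ
      (fun p : Matrix (Fin a) (Fin b) ℝ × (Fin b → ℝ) => p.1.mulVec p.2) where
  add_left A A' v := Matrix.add_mulVec A A' v
  smul_left r A v := Matrix.smul_mulVec r A v
  add_right A v w := Matrix.mulVec_add A v w
  smul_right r A v := by
    ext i
    simp only [Matrix.mulVec, dotProduct, Pi.smul_apply, smul_eq_mul, Finset.mul_sum]
    exact Finset.sum_congr rfl fun k _ => by ring
  bound := by
    refine ⟨b + 1, by positivity, fun A v => ?_⟩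
    rw [pi_norm_le_iff_of_nonneg (by positivity)]
    intro i
    calc ‖∑ k, A i k * v k‖ ≤ ∑ k, ‖A i k * v k‖ := norm_sum_le _ _
      _ ≤ ∑ _k : Fin b, ‖A‖ * ‖v‖ := by
          refine Finset.sum_le_sum fun k _ => ?_
          rw [norm_mul]
          exact mul_le_mul (A.norm_entry_le_entrywise_sup_norm)
            (norm_le_pi_norm v k) (norm_nonneg _) (norm_nonneg _)
      _ = (b : ℝ) * ‖A‖ * ‖v‖ := by simp [mul_assoc]
      _ ≤ ((b : ℝ) + 1) * ‖A‖ * ‖v‖ := by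
          have := norm_nonneg A; have := norm_nonneg v; nlinarith

noncomputable def lmulCLM {a b c : ℕ} (A : Matrix (Fin a) (Fin b) ℝ) :
    Matrix (Fin b) (Fin c) ℝ →L[ℝ] Matrix (Fin a) (Fin c) ℝ :=
  LinearMap.toContinuousLinearMap
    { toFun := fun B => A * B
      map_add' := fun B C => Matrix.mul_add A B C
      map_smul' := fun r B => Matrix.mul_smul A r B }

@[simp] lemma lmulCLM_apply {a b c : ℕ} (A : Matrix (Fin a) (Fin b) ℝ)
    (B : Matrix (Fin b) (Fin c) ℝ) : lmulCLM A B = A * B := rfl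

noncomputable def rmulCLM {a b c : ℕ} (B : Matrix (Fin b) (Fin c) ℝ) :
    Matrix (Fin a) (Fin b) ℝ →L[ℝ] Matrix (Fin a) (Fin c) ℝ :=
  LinearMap.toContinuousLinearMap
    { toFun := fun A => A * B
      map_add' := fun A A' => Matrix.add_mul A A' B
      map_smul' := fun r A => Matrix.smul_mul r A B }

@[simp] lemma rmulCLM_apply {a b c : ℕ} (B : Matrix (Fin b) (Fin c) ℝ)
    (A : Matrix (Fin a) (Fin b) ℝ) : rmulCLM B A = A * B := rfl

noncomputable def mvlCLM {a b : ℕ} (A : Matrix (Fin a) (Fin b) ℝ) : (Fin b → ℝ) →L[ℝ] (Fin a → ℝ) :=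
  LinearMap.toContinuousLinearMap (Matrix.mulVecLin A)

@[simp] lemma mvlCLM_apply {a b : ℕ} (A : Matrix (Fin a) (Fin b) ℝ) (v : Fin b → ℝ) :
    mvlCLM A v = A.mulVec v := rfl

noncomputable def mvrCLM {a b : ℕ} (v : Fin b → ℝ) : Matrix (Fin a) (Fin b) ℝ →L[ℝ] (Fin a → ℝ) :=
  LinearMap.toContinuousLinearMap
    { toFun := fun A => A.mulVec v
      map_add' := fun A A' => Matrix.add_mulVec A A' v
      map_smul' := fun r A => Matrix.smul_mulVec r A v }

@[simp] lemma mvrCLM_apply {a b : ℕ} (v : Fin b → ℝ) (A : Matrix (Fin a) (Fin b) ℝ) :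
    mvrCLM v A = A.mulVec v := rfl

theorem hasFDerivAt_matmul {a b c : ℕ} {f : E → Matrix (Fin a) (Fin b) ℝ}
    {g : E → Matrix (Fin b) (Fin c) ℝ} {f' : E →L[ℝ] Matrix (Fin a) (Fin b) ℝ}
    {g' : E →L[ℝ] Matrix (Fin b) (Fin c) ℝ} {x : E}
    (hf : HasFDerivAt f f' x) (hg : HasFDerivAt g g' x) :
    HasFDerivAt (fun y => f y * g y)
      ((lmulCLM (f x)).comp g' + (rmulCLM (g x)).comp f') x := by
  have h := (isBBM_mul.hasFDerivAt (f x, g x)).comp x (hf.prodMk hg)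
  convert h using 1 <;> rfl

theorem hasFDerivAt_matmulVec {a b : ℕ} {f : E → Matrix (Fin a) (Fin b) ℝ}
    {g : E → Fin b → ℝ} {f' : E →L[ℝ] Matrix (Fin a) (Fin b) ℝ}
    {g' : E →L[ℝ] Fin b → ℝ} {x : E}
    (hf : HasFDerivAt f f' x) (hg : HasFDerivAt g g' x) :
    HasFDerivAt (fun y => (f y).mulVec (g y))
      ((mvlCLM (f x)).comp g' + (mvrCLM (g x)).comp f') x := by
  have h := (isBBM_mulVec.hasFDerivAt (f x, g x)).comp x (hf.prodMk hg)
  convert h using 1 <;> rfl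
noncomputable def liftCLM {G : Type*} [AddCommGroup G] [Module ℝ G] [tG : TopologicalSpace G]
    (g : E → G) (h1 : ∀ a b, g (a + b) = g a + g b) (h2 : ∀ (r : ℝ) a, g (r • a) = r • g a)
    (h3 : Continuous g) : E →L[ℝ] G :=
  ⟨⟨⟨g, h1⟩, h2⟩, h3⟩

lemma liftCLM_apply {G : Type*} [AddCommGroup G] [Module ℝ G] [TopologicalSpace G]
    (g : E → G) (h1 : ∀ a b, g (a + b) = g a + g b) (h2 : ∀ (r : ℝ) a, g (r • a) = r • g a)
    (h3 : Continuous g) (v : E) : liftCLM g h1 h2 h3 v = g v := rfl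

lemma hasFDerivAt_const' {G : Type*} [AddCommGroup G] [Module ℝ G] [TopologicalSpace G]
    (c : G) (x : E) : HasFDerivAt (fun _ : E => c) (0 : E →L[ℝ] G) x :=
  hasFDerivAt_const c x
lemma hasFDerivAt_msub {a b : ℕ} {f g : E → Matrix (Fin a) (Fin b) ℝ}
    {f' g' : E →L[ℝ] Matrix (Fin a) (Fin b) ℝ} {x : E}
    (hf : HasFDerivAt f f' x) (hg : HasFDerivAt g g' x) :
    HasFDerivAt (fun y => f y - g y) (f' - g') x := hf.sub hg

lemma hasFDerivAt_vmprod {a b c : ℕ} {f : E → Fin a → ℝ} {g : E → Matrix (Fin b) (Fin c) ℝ}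
    {f' : E →L[ℝ] Fin a → ℝ} {g' : E →L[ℝ] Matrix (Fin b) (Fin c) ℝ} {x : E}
    (hf : HasFDerivAt f f' x) (hg : HasFDerivAt g g' x) :
    HasFDerivAt (fun y => (f y, g y)) (f'.prod g') x := hf.prodMk hg

lemma exists_deriv_prod {A B G : Type*} [NormedAddCommGroup A] [NormedSpace ℝ A]
    [NormedAddCommGroup B] [NormedSpace ℝ B] [AddCommGroup G] [Module ℝ G] [TopologicalSpace G]
    {T : A × B → G} {L : A × B →L[ℝ] G} {x : A × B} {g : A → B → G}
    (hT : HasFDerivAt T L x) (hg : ∀ a b, L (a, b) = g a b) :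
    ∃ L' : A × B →L[ℝ] G, HasFDerivAt T L' x ∧ ∀ a b, L' (a, b) = g a b := ⟨L, hT, hg⟩

noncomputable def entryCLM {a b : ℕ} (i : Fin a) (j : Fin b) :
    Matrix (Fin a) (Fin b) ℝ →L[ℝ] ℝ :=
  LinearMap.toContinuousLinearMap
    { toFun := fun M => M i j
      map_add' := fun _ _ => rfl
      map_smul' := fun _ _ => rfl }

lemma differentiable_entry {a b : ℕ} (i : Fin a) (j : Fin b) :
    Differentiable ℝ (fun M : Matrix (Fin a) (Fin b) ℝ => M i j) :=
  (entryCLM i j).differentiable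

lemma differentiable_det {k : ℕ} :
    Differentiable ℝ (fun M : Matrix (Fin k) (Fin k) ℝ => M.det) := by
  simp only [Matrix.det_apply']
  refine Differentiable.fun_sum fun σ _ => Differentiable.const_mul ?_ _
  intro M
  exact (HasFDerivAt.finset_prod
    (fun i _ => ((differentiable_entry (σ i) i) M).hasFDerivAt)).differentiableAt

lemma differentiable_updateRow {k : ℕ} (j : Fin k) (c : Fin k → ℝ) :
    Differentiable ℝ (fun M : Matrix (Fin k) (Fin k) ℝ => M.updateRow j c) := by
  refine differentiable_pi.mpr ?_
  intro i
  refine differentiable_pi.mpr ?_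
  intro l
  by_cases h : i = j
  · simp only [Matrix.updateRow_apply, h, if_pos rfl]
    exact differentiable_const _
  · simp only [Matrix.updateRow_apply, if_neg h]
    exact differentiable_entry i l

lemma differentiable_adjugate {k : ℕ} :
    Differentiable ℝ (fun M : Matrix (Fin k) (Fin k) ℝ => M.adjugate) := by
  refine differentiable_pi.mpr ?_
  intro i
  refine differentiable_pi.mpr ?_
  intro j
  simp only [Matrix.adjugate_apply]
  intro M
  exact DifferentiableAt.comp M (differentiable_det _)
    (differentiable_updateRow j (Pi.single i 1) M)

variable {E : Type*} [NormedAddCommGroup E] [NormedSpace ℝ E] in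
theorem hasFDerivAt_matinv {k : ℕ} {f : E → Matrix (Fin k) (Fin k) ℝ}
    {f' : E →L[ℝ] Matrix (Fin k) (Fin k) ℝ} {x : E}
    (hf : HasFDerivAt f f' x) (hu : IsUnit (f x)) :
    HasFDerivAt (fun y => (f y)⁻¹)
      (-((lmulCLM (f x)⁻¹).comp ((rmulCLM (f x)⁻¹).comp f'))) x := by
  have hdet : IsUnit (f x).det := (Matrix.isUnit_iff_isUnit_det _).mp hu
  have hdet0 : (f x).det ≠ 0 := IsUnit.ne_zero hdet
  have hdiff : DifferentiableAt ℝ (fun y => (f y)⁻¹) x := by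
    have heq : (fun y => (f y)⁻¹) = fun y => ((f y).det)⁻¹ • (f y).adjugate := by
      funext y; rw [Matrix.inv_def, Ring.inverse_eq_inv]
    rw [heq]
    exact (((differentiable_det.differentiableAt).comp x hf.differentiableAt).inv hdet0).smul
      ((differentiable_adjugate.differentiableAt).comp x hf.differentiableAt)
  have hev : ∀ᶠ y in nhds x, (f y)⁻¹ * f y = 1 := by
    have hc : ContinuousAt (fun y => (f y).det) x :=
      ((differentiable_det.differentiableAt).comp x hf.differentiableAt).continuousAt
    exact (hc.eventually_ne hdet0).mono fun y hy =>
      Matrix.nonsing_inv_mul _ (isUnit_iff_ne_zero.mpr hy)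
  set g' := fderiv ℝ (fun y => (f y)⁻¹) x with hg'
  have hg : HasFDerivAt (fun y => (f y)⁻¹) g' x := hdiff.hasFDerivAt
  have hprod := hasFDerivAt_matmul hg hf
  have hzero : HasFDerivAt (fun y => (f y)⁻¹ * f y)
      (0 : E →L[ℝ] Matrix (Fin k) (Fin k) ℝ) x :=
    (hasFDerivAt_const (1 : Matrix (Fin k) (Fin k) ℝ) x).congr_of_eventuallyEq hev
  have hL0 := hprod.unique hzero
  have key : ∀ v, g' v = -((f x)⁻¹ * f' v * (f x)⁻¹) := by
    intro v
    have h1 : (f x)⁻¹ * f' v + g' v * f x = 0 := by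
      have := congrArg (fun L : E →L[ℝ] Matrix (Fin k) (Fin k) ℝ => L v) hL0
      simpa using this
    have h2 : g' v * f x = -((f x)⁻¹ * f' v) := eq_neg_of_add_eq_zero_right h1
    calc g' v = g' v * (f x * (f x)⁻¹) := by
          rw [Matrix.mul_nonsing_inv _ hdet, Matrix.mul_one]
      _ = g' v * f x * (f x)⁻¹ := by rw [Matrix.mul_assoc]
      _ = -((f x)⁻¹ * f' v * (f x)⁻¹) := by rw [h2, Matrix.neg_mul]
  have hEq : (-((lmulCLM (f x)⁻¹).comp ((rmulCLM (f x)⁻¹).comp f'))) = g' := by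
    ext v
    simp [key v, Matrix.mul_assoc]
  rw [hEq]
  exact hg

end KalmanAux

open KalmanAux

lemma stmt8_alg1 {nx nz : ℕ} (H : Matrix (Fin nz) (Fin nx) ℝ)
    (F ΔP Pm : Matrix (Fin nx) (Fin nx) ℝ)
    (Si : Matrix (Fin nz) (Fin nz) ℝ) (v : Fin nz → ℝ) (Δx : Fin nx → ℝ) :
    F *ᵥ Δx + ((Pm * Hᵀ * Si) *ᵥ -(H *ᵥ F *ᵥ Δx) +
        (Pm * Hᵀ * -(Si * (H * (F*ΔP*Fᵀ) * Hᵀ * Si)) + F*ΔP*Fᵀ * Hᵀ * Si) *ᵥ v) =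
    ((1 - Pm*Hᵀ*Si*H) * F) *ᵥ Δx + ((1 - Pm*Hᵀ*Si*H) * F * ΔP * Fᵀ * Hᵀ * Si) *ᵥ v := by
  simp only [Matrix.sub_mul, Matrix.one_mul, Matrix.mul_neg, Matrix.mul_assoc,
    Matrix.sub_mulVec, Matrix.add_mulVec, Matrix.neg_mulVec, Matrix.mulVec_neg,
    ← Matrix.mulVec_mulVec, neg_neg]
  abel

lemma stmt8_alg2 {nx nz : ℕ} (H : Matrix (Fin nz) (Fin nx) ℝ)
    (F ΔP Pm : Matrix (Fin nx) (Fin nx) ℝ)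
    (Si : Matrix (Fin nz) (Fin nz) ℝ) :
    (1 - Pm*Hᵀ*Si*H) * (F*ΔP*Fᵀ) +
      -((Pm * Hᵀ * -(Si * (H * (F*ΔP*Fᵀ) * Hᵀ * Si)) + F*ΔP*Fᵀ * Hᵀ * Si) * H) * Pm =
    (1 - Pm*Hᵀ*Si*H) * F * ΔP * Fᵀ * (1 - Hᵀ*Si*H*Pm) := by
  simp only [Matrix.sub_mul, Matrix.mul_sub, Matrix.one_mul, Matrix.mul_one,
    Matrix.neg_mul, Matrix.mul_neg, Matrix.add_mul, Matrix.mul_assoc, neg_neg]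
  abel

/-- The one-step Kalman map
`T(x, P) = (μ + K ·ᵥ (z − H ·ᵥ μ), (I − K·H)·P⁻)` with `μ = F ·ᵥ x + B ·ᵥ u + f`,
`P⁻ = F·P·Fᵀ + Q`, `S = H·P⁻·Hᵀ + R`, `K = P⁻·Hᵀ·S⁻¹`, is Fréchet differentiable at
`(x₀, P₀)` (assuming `S₀` invertible) with derivative
`(Δx, ΔP) ↦ ((I − K₀·H)·F ·ᵥ Δx + ((I − K₀·H)·F·ΔP·Fᵀ·Hᵀ·S₀⁻¹) ·ᵥ (z − H ·ᵥ μ₀),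
  (I − K₀·H)·F·ΔP·Fᵀ·(I − Hᵀ·S₀⁻¹·H·P₀⁻))`. -/
theorem stmt_8 (n_x n_z n_u : ℕ) (hnx : 0 < n_x) (hnz : 0 < n_z) (hnu : 0 < n_u)
    (H : Matrix (Fin n_z) (Fin n_x) ℝ) (R : Matrix (Fin n_z) (Fin n_z) ℝ)
    (F Q : Matrix (Fin n_x) (Fin n_x) ℝ) (B : Matrix (Fin n_x) (Fin n_u) ℝ)
    (u : Fin n_u → ℝ) (f : Fin n_x → ℝ) (z : Fin n_z → ℝ)
    (x₀ : Fin n_x → ℝ) (P₀ : Matrix (Fin n_x) (Fin n_x) ℝ)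
    (P₀m : Matrix (Fin n_x) (Fin n_x) ℝ) (hP₀m : P₀m = F * P₀ * Fᵀ + Q)
    (S₀ : Matrix (Fin n_z) (Fin n_z) ℝ) (hS₀ : S₀ = H * P₀m * Hᵀ + R)
    (hS : IsUnit S₀)
    (K₀ : Matrix (Fin n_x) (Fin n_z) ℝ) (hK₀ : K₀ = P₀m * Hᵀ * S₀⁻¹)
    (μ₀ : Fin n_x → ℝ) (hμ₀ : μ₀ = F.mulVec x₀ + B.mulVec u + f) :
    ∃ L : ((Fin n_x → ℝ) × Matrix (Fin n_x) (Fin n_x) ℝ) →L[ℝ]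
        ((Fin n_x → ℝ) × Matrix (Fin n_x) (Fin n_x) ℝ),
      HasFDerivAt
        (fun xP : (Fin n_x → ℝ) × Matrix (Fin n_x) (Fin n_x) ℝ =>
          ((F.mulVec xP.1 + B.mulVec u + f) +
            ((F * xP.2 * Fᵀ + Q) * Hᵀ *
              (H * (F * xP.2 * Fᵀ + Q) * Hᵀ + R)⁻¹).mulVec
                (z - H.mulVec (F.mulVec xP.1 + B.mulVec u + f)),
           (1 - (F * xP.2 * Fᵀ + Q) * Hᵀ *
              (H * (F * xP.2 * Fᵀ + Q) * Hᵀ + R)⁻¹ * H) * (F * xP.2 * Fᵀ + Q)))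
        L (x₀, P₀) ∧
      ∀ (Δx : Fin n_x → ℝ) (ΔP : Matrix (Fin n_x) (Fin n_x) ℝ),
        L (Δx, ΔP) =
          (((1 - K₀ * H) * F).mulVec Δx +
            ((1 - K₀ * H) * F * ΔP * Fᵀ * Hᵀ * S₀⁻¹).mulVec (z - H.mulVec μ₀),
           (1 - K₀ * H) * F * ΔP * Fᵀ * (1 - Hᵀ * S₀⁻¹ * H * P₀m)) := by
  subst hμ₀ hK₀ hS₀ hP₀m
  set x := ((x₀, P₀) : (Fin n_x → ℝ) × Matrix (Fin n_x) (Fin n_x) ℝ) with hx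
  have hfst := hasFDerivAt_fst (𝕜 := ℝ) (p := x)
  have hc2 : @Continuous ((Fin n_x → ℝ) × Matrix (Fin n_x) (Fin n_x) ℝ) (Matrix (Fin n_x) (Fin n_x) ℝ)
      NormedAddCommGroup.toSeminormedAddCommGroup.toPseudoMetricSpace.toUniformSpace.toTopologicalSpace
      instTopologicalSpaceMatrix (fun p => p.2) := continuous_snd
  have hsnd : HasFDerivAt (fun p : (Fin n_x → ℝ) × Matrix (Fin n_x) (Fin n_x) ℝ => p.2)
      (liftCLM (tG := instTopologicalSpaceMatrix) (fun p : (Fin n_x → ℝ) × Matrix (Fin n_x) (Fin n_x) ℝ => p.2)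
        (fun _ _ => rfl) (fun _ _ => rfl) hc2) x := (liftCLM _ _ _ _).hasFDerivAt
  have hμ := ((hasFDerivAt_matmulVec (hasFDerivAt_const' F x) hfst).add_const (B.mulVec u)).add_const f
  have hPm := ((hasFDerivAt_matmul (hasFDerivAt_matmul (hasFDerivAt_const' F x) hsnd)
      (hasFDerivAt_const' Fᵀ x)).add_const Q)
  have hSd := ((hasFDerivAt_matmul (hasFDerivAt_matmul (hasFDerivAt_const' H x) hPm)
      (hasFDerivAt_const' Hᵀ x)).add_const R)
  have hSinv := hasFDerivAt_matinv hSd hS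
  have hKd := hasFDerivAt_matmul (hasFDerivAt_matmul hPm (hasFDerivAt_const' Hᵀ x)) hSinv
  have hinnov := (hasFDerivAt_const' z x).sub (hasFDerivAt_matmulVec (hasFDerivAt_const' H x) hμ)
  have hxp := hμ.add (hasFDerivAt_matmulVec hKd hinnov)
  have hPp := hasFDerivAt_matmul (hasFDerivAt_msub (hasFDerivAt_const' (1 : Matrix (Fin n_x) (Fin n_x) ℝ) x)
      (hasFDerivAt_matmul hKd (hasFDerivAt_const' H x))) hPm
  have hT := hasFDerivAt_vmprod hxp hPp
  refine exists_deriv_prod hT ?_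
  clear hμ hPm hSd hSinv hKd hinnov hxp hPp hfst hsnd
  intro Δx ΔP
  simp only [ContinuousLinearMap.prod_apply, ContinuousLinearMap.add_apply,
    ContinuousLinearMap.comp_apply, ContinuousLinearMap.coe_fst', ContinuousLinearMap.coe_snd', liftCLM_apply,
    ContinuousLinearMap.sub_apply, ContinuousLinearMap.neg_apply,
    ContinuousLinearMap.zero_apply, lmulCLM_apply, rmulCLM_apply, mvlCLM_apply, mvrCLM_apply,
    Matrix.zero_mul, Matrix.mul_zero, Matrix.zero_mulVec, Matrix.mulVec_zero,
    add_zero, zero_add, zero_sub, sub_zero]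
  simp only [Prod.mk.injEq]
  exact ⟨stmt8_alg1 H F ΔP _ _ _ Δx, stmt8_alg2 H F ΔP _ _⟩
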